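/- The ideals J_i of A, for i ∈ Q0, satisfy the following relations: (a) J_i · J_i = J_i for all i; (b) J_i · J_j = J_j · J_i whenever there is no arrow between i and j in Q; (c) J_j · J_i · J_j = J_i · J_j · J_i = J_j · J_i whenever there is an arrow i → j in Q. -/

import Mathlib

set_option maxHeartbeats 1000000
set_option synthInstance.maxHeartbeats 400000

namespace DPF

open Matrix

/-- A finite quiver on `Fin n` (given by an arrow relation, no loops, no two-cycles)
whose underlying (undirected simple) graph is a tree. -/
structure TreeQuiver (n : ℕ) : Type where
  arr : Fin n → Fin n → Prop
  loopless : ∀ i, ¬ arr i i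
  oneway : ∀ i j, arr i j → ¬ arr j i
  isTree : (SimpleGraph.fromRel arr).IsTree

namespace TreeQuiver

variable {n : ℕ}

/-- The underlying simple graph of the quiver. -/
def G (Q : TreeQuiver n) : SimpleGraph (Fin n) := SimpleGraph.fromRel Q.arr

/-- `Q.Reach i j` : `j` is a successor of `i`, i.e. there is an oriented
(possibly trivial) path from `i` to `j`. -/
def Reach (Q : TreeQuiver n) (i j : Fin n) : Prop := Relation.ReflTransGen Q.arr i j

/-- `i` is a sink (no outgoing arrows). -/
def IsSink (Q : TreeQuiver n) (i : Fin n) : Prop := ∀ j, ¬ Q.arr i j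

/-- `i` is a source (no incoming arrows). -/
def IsSource (Q : TreeQuiver n) (i : Fin n) : Prop := ∀ j, ¬ Q.arr j i

/-- The degree of a vertex in the underlying graph. -/
noncomputable def deg (Q : TreeQuiver n) (i : Fin n) : ℕ := {j | Q.G.Adj i j}.ncard

/-- `i ∈ K(Q)`: `i` is a sink or a source. -/
def inK (Q : TreeQuiver n) (i : Fin n) : Prop := Q.IsSink i ∨ Q.IsSource i

/-- `i ∈ K'(Q)`: a sink or a source of degree at least 2. -/
def inK' (Q : TreeQuiver n) (i : Fin n) : Prop := Q.inK i ∧ 2 ≤ Q.deg i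

/-- `Q` is admissible: all vertices of degree at least 3 are sinks or sources. -/
def Admissible (Q : TreeQuiver n) : Prop := ∀ i, 3 ≤ Q.deg i → Q.inK i

/-- A maximal chain of `Q` is (the oriented path between) a pair `(s, t)` where `s` is a
source, `t` is a sink, and `t` is reachable from `s`. -/
def IsMaxChain (Q : TreeQuiver n) (s t : Fin n) : Prop :=
  Q.IsSource s ∧ Q.IsSink t ∧ Q.Reach s t

/-- The vertex set of a chain from `s` to `t`. -/
def chainSet (Q : TreeQuiver n) (s t : Fin n) : Set (Fin n) := {v | Q.Reach s v ∧ Q.Reach v t}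

/-- The vertex set of the union of a collection `S` of (maximal) chains, i.e. of the
corresponding "support" subgraph. -/
def suppVerts (Q : TreeQuiver n) (S : Set (Fin n × Fin n)) : Set (Fin n) :=
  {v | ∃ c ∈ S, v ∈ Q.chainSet c.1 c.2}

/-- The adjacency relation of the subgraph given by the union of the chains in `S`. -/
def suppAdj (Q : TreeQuiver n) (S : Set (Fin n × Fin n)) (i j : Fin n) : Prop :=
  Q.G.Adj i j ∧ ∃ c ∈ S, i ∈ Q.chainSet c.1 c.2 ∧ j ∈ Q.chainSet c.1 c.2

/-- The degree of a vertex in the subgraph given by the union of the chains in `S`. -/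
noncomputable def suppDeg (Q : TreeQuiver n) (S : Set (Fin n × Fin n)) (i : Fin n) : ℕ :=
  {j | Q.suppAdj S i j}.ncard

/-- The subgraph given by the union of the chains in `S` is connected. -/
def SuppConnected (Q : TreeQuiver n) (S : Set (Fin n × Fin n)) : Prop :=
  ∀ u ∈ Q.suppVerts S, ∀ v ∈ Q.suppVerts S, Relation.ReflTransGen (Q.suppAdj S) u v

/-- The two unions of (maximal) chains `S`, `T` are equal as subgraphs of `Q`. -/
def SuppEq (Q : TreeQuiver n) (S T : Set (Fin n × Fin n)) : Prop :=
  Q.suppVerts S = Q.suppVerts T ∧ ∀ i j, Q.suppAdj S i j ↔ Q.suppAdj T i j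

/-- A path function: `α i` is a successor of `i` or `0` (here: `none`). -/
def IsPathFun (Q : TreeQuiver n) (α : Fin n → Option (Fin n)) : Prop :=
  ∀ i j, α i = some j → Q.Reach i j

/-- Monotonicity of a path function. -/
def MonotoneFun (Q : TreeQuiver n) (α : Fin n → Option (Fin n)) : Prop :=
  ∀ i j x, Q.Reach j i → α i = some x → ∃ y, α j = some y ∧ Q.Reach y x

/-- The support of a function `α : Q₀ → Q₀ ∪ {0}`: the set of maximal chains containing
some value of `α`. -/
def suppF (Q : TreeQuiver n) (α : Fin n → Option (Fin n)) : Set (Fin n × Fin n) :=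
  {c | Q.IsMaxChain c.1 c.2 ∧ ∃ i x, α i = some x ∧ x ∈ Q.chainSet c.1 c.2}

/-- A special function: a monotone path function with connected support such that any
sink-or-source vertex of the support sent to `0` has degree `1` in the support. -/
def SpecialFun (Q : TreeQuiver n) (α : Fin n → Option (Fin n)) : Prop :=
  Q.IsPathFun α ∧ Q.MonotoneFun α ∧ Q.SuppConnected (Q.suppF α) ∧
    ∀ i, Q.inK i → i ∈ Q.suppVerts (Q.suppF α) → α i = none → Q.suppDeg (Q.suppF α) i = 1

/-- `Q.Gamma s t`: the vertex set of the connected component of `t` in the graph obtained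
from `Q` by deleting the vertex `s`. -/
def Gamma (Q : TreeQuiver n) (s t : Fin n) : Set (Fin n) :=
  {v | Relation.ReflTransGen (fun a b => Q.G.Adj a b ∧ a ≠ s ∧ b ≠ s) t v}

end TreeQuiver

open TreeQuiver

section Algebra

variable {n : ℕ} (Q : TreeQuiver n) (k : Type) [Field k]

/-- The path algebra of the tree quiver `Q` over `k`, realized concretely as the
subalgebra of `Matrix (Fin n) (Fin n) k` of matrices supported on the reachability
relation; the matrix unit in position `(j, i)` corresponds to the unique path
`a_{ji}` from `i` to `j`. -/
def pathAlg : Subalgebra k (Matrix (Fin n) (Fin n) k) where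
  carrier := {x | ∀ i j, ¬ Q.Reach j i → x i j = 0}
  mul_mem' := by
    intro x y hx hy i j hij
    rw [Matrix.mul_apply]
    refine Finset.sum_eq_zero fun m _ => ?_
    by_cases h1 : Q.Reach m i
    · have h2 : ¬ Q.Reach j m := fun h2 => hij (Relation.ReflTransGen.trans h2 h1)
      rw [hy m j h2, mul_zero]
    · rw [hx i m h1, zero_mul]
  one_mem' := by
    intro i j hij
    have hne : i ≠ j := by rintro rfl; exact hij Relation.ReflTransGen.refl
    exact Matrix.one_apply_ne hne
  add_mem' := by
    intro x y hx hy i j hij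
    simp only [Matrix.add_apply, hx i j hij, hy i j hij, add_zero]
  zero_mem' := by intro i j hij; rfl
  algebraMap_mem' := by
    intro r i j hij
    have hne : i ≠ j := by rintro rfl; exact hij Relation.ReflTransGen.refl
    simp [Matrix.algebraMap_matrix_apply, hne]

theorem std_mem (t s : Fin n) (h : Q.Reach s t) :
    Matrix.single t s (1 : k) ∈ pathAlg Q k := by
  intro i j hij
  by_cases h1 : t = i ∧ s = j
  · obtain ⟨rfl, rfl⟩ := h1
    exact absurd h hij
  · simp only [Matrix.single, Matrix.of_apply, if_neg h1]

/-- The path `a_{ts}` from `s` to `t`, as an element of the path algebra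
(by convention `0` if `t` is not a successor of `s`). -/
noncomputable def aEl (t s : Fin n) : pathAlg Q k :=
  haveI := Classical.dec (Q.Reach s t)
  if h : Q.Reach s t then ⟨Matrix.single t s 1, std_mem Q k t s h⟩ else 0

/-- The trivial path `e_i` at the vertex `i`. -/
noncomputable def e (i : Fin n) : pathAlg Q k :=
  ⟨Matrix.single i i 1, std_mem Q k i i Relation.ReflTransGen.refl⟩

/-- `B` is a two-sided ideal of the path algebra, i.e. a sub-bimodule of the regular
`A`-`A`-bimodule `A`. -/
def IsIdeal (B : Submodule k ↥(pathAlg Q k)) : Prop :=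
  (∀ a : ↥(pathAlg Q k), ∀ x ∈ B, a * x ∈ B) ∧ (∀ a : ↥(pathAlg Q k), ∀ x ∈ B, x * a ∈ B)

/-- `B` is an indecomposable sub-bimodule of `A`: a nonzero two-sided ideal which does not
decompose as an (internal) direct sum of two nonzero sub-bimodules. -/
def Indec (B : Submodule k ↥(pathAlg Q k)) : Prop :=
  IsIdeal Q k B ∧ B ≠ ⊥ ∧
    ∀ B1 B2 : Submodule k ↥(pathAlg Q k), IsIdeal Q k B1 → IsIdeal Q k B2 →
      B1 ⊔ B2 = B → B1 ⊓ B2 = ⊥ → B1 = ⊥ ∨ B2 = ⊥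

/-- The support of a two-sided ideal `B`: the set of maximal chains `(s, t)` of `Q`
such that `a_{ts} ∈ B`. -/
def suppB (B : Submodule k ↥(pathAlg Q k)) : Set (Fin n × Fin n) :=
  {c | Q.IsMaxChain c.1 c.2 ∧ aEl Q k c.2 c.1 ∈ B}

/-- The indecomposable projective left module `P_j = A e_j`, as a left ideal of `A`. -/
def Pmod (j : Fin n) : Submodule ↥(pathAlg Q k) ↥(pathAlg Q k) where
  carrier := {x | x * e Q k j = x}
  add_mem' := by
    intro a b ha hb
    show (a + b) * e Q k j = a + b
    rw [add_mul]
    rw [show a * e Q k j = a from ha, show b * e Q k j = b from hb]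
  zero_mem' := by
    show (0 : ↥(pathAlg Q k)) * e Q k j = 0
    rw [zero_mul]
  smul_mem' := by
    intro c x hx
    show (c • x) * e Q k j = c • x
    rw [smul_eq_mul, mul_assoc, show x * e Q k j = x from hx]

/-- `B e_i`, as a left ideal (left `A`-submodule) of `A`; here `B` is a two-sided ideal. -/
def BeiL (B : Submodule k ↥(pathAlg Q k)) (hB : IsIdeal Q k B) (i : Fin n) :
    Submodule ↥(pathAlg Q k) ↥(pathAlg Q k) where
  carrier := {x | x ∈ B ∧ x * e Q k i = x}
  add_mem' := by
    intro a b ha hb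
    exact ⟨B.add_mem ha.1 hb.1, by rw [add_mul, ha.2, hb.2]⟩
  zero_mem' := ⟨B.zero_mem, by rw [zero_mul]⟩
  smul_mem' := by
    intro c x hx
    refine ⟨?_, ?_⟩
    · show c * x ∈ B
      exact hB.1 c x hx.1
    · show (c • x) * e Q k i = c • x
      rw [smul_eq_mul, mul_assoc, hx.2]

/-- A left `A`-submodule `N` of `A` is (zero or) indecomposable. -/
def IndecL (N : Submodule ↥(pathAlg Q k) ↥(pathAlg Q k)) : Prop :=
  N ≠ ⊥ ∧ ∀ N1 N2 : Submodule ↥(pathAlg Q k) ↥(pathAlg Q k),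
    N1 ⊔ N2 = N → N1 ⊓ N2 = ⊥ → N1 = ⊥ ∨ N2 = ⊥

/-- `x` is "the" function `x_B` associated to the indecomposable sub-bimodule `B`:
`x i = none` iff `B e_i = 0`, and `x i = some j` implies `B e_i ≅ P_j` as left `A`-modules. -/
def IsXB (B : Submodule k ↥(pathAlg Q k)) (hB : IsIdeal Q k B) (x : Fin n → Option (Fin n)) :
    Prop :=
  ∀ i, (x i = none ↔ BeiL Q k B hB i = ⊥) ∧
    ∀ j, x i = some j →
      Nonempty (↥(BeiL Q k B hB i) ≃ₗ[↥(pathAlg Q k)] ↥(Pmod Q k j))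

/-- The subspace `B_x` of `A` associated to a (special) function `x` : the `k`-linear span
of all paths `a_{ts}` with `x s ≠ 0` and `t` a successor of `x s`. -/
def Bspan (x : Fin n → Option (Fin n)) : Submodule k ↥(pathAlg Q k) :=
  Submodule.span k {v | ∃ s xs t, x s = some xs ∧ Q.Reach xs t ∧ v = aEl Q k t s}

/-- The two-sided ideal `J_i`: the span of all paths of `Q` except the trivial path `e_i`. -/
def J (i : Fin n) : Submodule k ↥(pathAlg Q k) :=
  Submodule.span k {v | ∃ t s, Q.Reach s t ∧ ¬(t = i ∧ s = i) ∧ v = aEl Q k t s}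

/-- The indecomposable direct summand `J_s^{(q)}` of `J_s` corresponding to the connected
component (of `Q` with `s` deleted) containing the neighbour `t` of `s`: the span of all
paths `a_{pq}` with `p, q ∈ Γ^{(t)} ∪ {s}` other than `e_s`. -/
def Jc (s t : Fin n) : Submodule k ↥(pathAlg Q k) :=
  Submodule.span k {v | ∃ p q, Q.Reach q p ∧ p ∈ Q.Gamma s t ∪ {s} ∧ q ∈ Q.Gamma s t ∪ {s} ∧
    ¬(p = s ∧ q = s) ∧ v = aEl Q k p q}

end Algebra

section Tensor

open TensorProduct

/-- The multiplication map `I ⊗_k J → A` for two `k`-subspaces `I`, `J` of a `k`-algebra `A`. -/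
noncomputable def mulMap (k A : Type) [CommRing k] [Ring A] [Algebra k A]
    (I J : Submodule k A) : (↥I ⊗[k] ↥J) →ₗ[k] A :=
  TensorProduct.lift (LinearMap.compl₁₂ (LinearMap.mul k A) I.subtype J.subtype)

/-- The submodule of `I ⊗_k J` spanned by the "balancing" relators `ba ⊗ d - b ⊗ ad`;
the quotient of `I ⊗_k J` by it is `I ⊗_A J`, so the multiplication map
`I ⊗_A J → A` is injective if and only if the kernel of `mulMap` equals `balRel`. -/
noncomputable def balRel (k A : Type) [CommRing k] [Ring A] [Algebra k A]
    (I J : Submodule k A) : Submodule k (↥I ⊗[k] ↥J) :=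
  Submodule.span k {z | ∃ (b : I) (d : J) (a : A) (h1 : (b : A) * a ∈ I) (h2 : a * (d : A) ∈ J),
    z = (⟨(b : A) * a, h1⟩ : I) ⊗ₜ[k] d - (b ⊗ₜ[k] (⟨a * (d : A), h2⟩ : J))}

end Tensor


section ProofAux

lemma adj_of_arr (Q : TreeQuiver n) {a b : Fin n} (h : Q.arr a b) : Q.G.Adj a b := by
  rw [TreeQuiver.G, SimpleGraph.fromRel_adj]
  exact ⟨fun e => Q.loopless a (e ▸ h), Or.inl h⟩

lemma walk_of_reach (Q : TreeQuiver n) {u v : Fin n} (h : Q.Reach u v) :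
    ∃ w : Q.G.Walk u v, ∀ d ∈ w.darts, Q.arr d.toProd.1 d.toProd.2 := by
  induction h with
  | refl => exact ⟨.nil, by simp⟩
  | tail _ hbc ih =>
    obtain ⟨w, hw⟩ := ih
    refine ⟨w.concat (adj_of_arr Q hbc), ?_⟩
    intro d hd
    rw [SimpleGraph.Walk.darts_concat, List.concat_eq_append, List.mem_append, List.mem_singleton] at hd
    rcases hd with hd | hd
    · exact hw d hd
    · subst hd
      exact hbc

lemma reach_of_walk (Q : TreeQuiver n) {u v : Fin n} (w : Q.G.Walk u v)
    (hw : ∀ d ∈ w.darts, Q.arr d.toProd.1 d.toProd.2) : Q.Reach u v := by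
  induction w with
  | nil => exact Relation.ReflTransGen.refl
  | @cons a b c h p ih =>
    have h1 : Q.arr a b := hw _ (by rw [SimpleGraph.Walk.darts_cons]; exact List.mem_cons_self)
    have h2 := ih (fun d hd => hw d (by rw [SimpleGraph.Walk.darts_cons]; exact List.mem_cons_of_mem _ hd))
    exact Relation.ReflTransGen.head h1 h2

lemma dart_reach (Q : TreeQuiver n) {u v : Fin n} (w : Q.G.Walk u v)
    (hw : ∀ d ∈ w.darts, Q.arr d.toProd.1 d.toProd.2) {d} (hd : d ∈ w.darts) :
    Q.Reach u d.toProd.1 ∧ Q.Reach d.toProd.2 v := by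
  induction w with
  | nil => simp at hd
  | @cons a b c h p ih =>
    have hwp : ∀ d ∈ p.darts, Q.arr d.toProd.1 d.toProd.2 :=
      fun d hd => hw d (by rw [SimpleGraph.Walk.darts_cons]; exact List.mem_cons_of_mem _ hd)
    rw [SimpleGraph.Walk.darts_cons, List.mem_cons] at hd
    rcases hd with rfl | hd
    · exact ⟨Relation.ReflTransGen.refl, reach_of_walk Q p hwp⟩
    · obtain ⟨h1, h2⟩ := ih hwp hd
      have hab : Q.arr a b := hw _ (by rw [SimpleGraph.Walk.darts_cons]; exact List.mem_cons_self)
      exact ⟨Relation.ReflTransGen.head hab h1, h2⟩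

lemma shorter (Q : TreeQuiver n) {u v x : Fin n} (w : Q.G.Walk u v)
    (hw : ∀ d ∈ w.darts, Q.arr d.toProd.1 d.toProd.2) {d} (hd : d ∈ w.darts)
    (hx : d.toProd.1 = x) :
    ∃ w' : Q.G.Walk u x, (∀ d ∈ w'.darts, Q.arr d.toProd.1 d.toProd.2) ∧ w'.length < w.length := by
  induction w with
  | nil => simp at hd
  | @cons a b c h p ih =>
    rw [SimpleGraph.Walk.darts_cons, List.mem_cons] at hd
    rcases hd with rfl | hd
    · have hux : a = x := hx
      subst hux
      exact ⟨.nil, by simp, by simp [SimpleGraph.Walk.length_cons]⟩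
    · have hwp : ∀ d ∈ p.darts, Q.arr d.toProd.1 d.toProd.2 :=
        fun d hd => hw d (by rw [SimpleGraph.Walk.darts_cons]; exact List.mem_cons_of_mem _ hd)
      obtain ⟨w', h1, h2⟩ := ih hwp hd
      refine ⟨.cons h w', ?_, by simp only [SimpleGraph.Walk.length_cons]; omega⟩
      intro d' hd'
      rw [SimpleGraph.Walk.darts_cons, List.mem_cons] at hd'
      rcases hd' with rfl | hd'
      · exact hw _ (by rw [SimpleGraph.Walk.darts_cons]; exact List.mem_cons_self)
      · exact h1 d' hd'

lemma bridge_walks (Q : TreeQuiver n) {a c : Fin n} (hadj : Q.G.Adj c a) :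
    ∀ (p : Q.G.Walk c a), s(c, a) ∈ p.edges := by
  have hA : Q.G.IsAcyclic := Q.isTree.2
  exact (SimpleGraph.isBridge_iff_adj_and_forall_walk_mem_edges.mp
    (SimpleGraph.isAcyclic_iff_forall_adj_isBridge.mp hA hadj))

lemma dart_of_edge {V : Type*} {G : SimpleGraph V} {u v : V} (w : G.Walk u v) {x y : V}
    (he : s(x, y) ∈ w.edges) :
    ∃ d ∈ w.darts, d.toProd = (x, y) ∨ d.toProd = (y, x) := by
  rw [SimpleGraph.Walk.edges, List.mem_map] at he
  obtain ⟨d, hd, hde⟩ := he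
  refine ⟨d, hd, ?_⟩
  have : s(d.toProd.1, d.toProd.2) = s(x, y) := hde
  rw [Sym2.eq_iff] at this
  rcases this with ⟨h1, h2⟩ | ⟨h1, h2⟩
  · exact Or.inl (Prod.ext h1 h2)
  · exact Or.inr (Prod.ext h1 h2)

lemma no_cycle (Q : TreeQuiver n) {a c : Fin n} (hac : Q.arr a c) : ¬ Q.Reach c a := by
  intro hr
  have hadj : Q.G.Adj c a := (adj_of_arr Q hac).symm
  obtain ⟨w0, hw0⟩ := walk_of_reach Q hr
  suffices H : ∀ m (w : Q.G.Walk c a), w.length ≤ m →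
      (∀ d ∈ w.darts, Q.arr d.toProd.1 d.toProd.2) → False from H w0.length w0 le_rfl hw0
  intro m
  induction m with
  | zero =>
    intro w hlen hw
    have he := bridge_walks Q hadj w
    have hl : w.edges.length = 0 := by rw [SimpleGraph.Walk.length_edges]; omega
    rw [List.length_eq_zero_iff.mp hl] at he
    simp at he
  | succ m ih =>
    intro w hlen hw
    obtain ⟨d, hd, hde⟩ := dart_of_edge w (bridge_walks Q hadj w)
    rcases hde with hde | hde
    · -- d = (c, a) : arr c a, contradiction with oneway
      have := hw d hd
      rw [hde] at this
      exact Q.oneway a c hac this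
    · -- d = (a, c): shorter walk c → a
      have hfst : d.toProd.1 = a := by rw [hde]
      obtain ⟨w', h1, h2⟩ := shorter Q w hw hd hfst
      exact ih w' (by omega) h1

lemma reach_antisymm (Q : TreeQuiver n) {a b : Fin n} (h1 : Q.Reach a b) (h2 : Q.Reach b a) :
    a = b := by
  rcases Relation.ReflTransGen.cases_head h1 with rfl | ⟨x, hax, hxb⟩
  · rfl
  · exact absurd (hxb.trans h2) (no_cycle Q hax)

lemma mid (Q : TreeQuiver n) {i j s : Fin n} (hij : Q.arr i j) (h1 : Q.Reach i s)
    (h2 : Q.Reach s j) : s = i ∨ s = j := by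
  by_contra hcon
  push_neg at hcon
  obtain ⟨w1, hw1⟩ := walk_of_reach Q h1
  obtain ⟨w2, hw2⟩ := walk_of_reach Q h2
  have hadj : Q.G.Adj i j := adj_of_arr Q hij
  have he := bridge_walks Q hadj (w1.append w2)
  rw [SimpleGraph.Walk.edges_append, List.mem_append] at he
  rcases he with he | he
  · obtain ⟨d, hd, hde⟩ := dart_of_edge w1 he
    rcases hde with hde | hde
    · have := (dart_reach Q w1 hw1 hd).2
      rw [hde] at this
      exact hcon.2 (reach_antisymm Q h2 this)
    · have := hw1 d hd
      rw [hde] at this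
      exact Q.oneway i j hij this
  · obtain ⟨d, hd, hde⟩ := dart_of_edge w2 he
    rcases hde with hde | hde
    · have := (dart_reach Q w2 hw2 hd).1
      rw [hde] at this
      exact hcon.1 (reach_antisymm Q this h1)
    · have := hw2 d hd
      rw [hde] at this
      exact Q.oneway i j hij this

lemma exists_mid (Q : TreeQuiver n) {i j : Fin n} (h1 : ¬ Q.arr j i) (h2 : j ≠ i)
    (h3 : Q.Reach j i) : ∃ s, s ≠ i ∧ s ≠ j ∧ Q.Reach j s ∧ Q.Reach s i := by
  rcases Relation.ReflTransGen.cases_head h3 with rfl | ⟨x, hjx, hxi⟩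
  · exact absurd rfl h2
  · refine ⟨x, fun e => h1 (e ▸ hjx), fun e => Q.loopless j (e ▸ hjx), .single hjx, hxi⟩



variable {n : ℕ} (Q : TreeQuiver n) (k : Type) [Field k]

lemma aEl_pos {s t : Fin n} (h : Q.Reach s t) :
    aEl Q k t s = ⟨Matrix.single t s 1, std_mem Q k t s h⟩ := by
  unfold aEl
  rw [dif_pos h]

lemma aEl_mul {t s u : Fin n} (h1 : Q.Reach s t) (h2 : Q.Reach u s) :
    aEl Q k t s * aEl Q k s u = aEl Q k t u := by
  have h3 := h2.trans h1
  apply Subtype.ext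
  rw [aEl_pos Q k h1, aEl_pos Q k h2, aEl_pos Q k h3]
  show (Matrix.single t s (1:k)) * (Matrix.single s u 1) =
    Matrix.single t u 1
  rw [Matrix.single_mul_single_same, one_mul]

lemma aEl_mul_ne {t s t' u : Fin n} (h : s ≠ t') (h1 : Q.Reach s t) (h2 : Q.Reach u t') :
    aEl Q k t s * aEl Q k t' u = 0 := by
  apply Subtype.ext
  rw [aEl_pos Q k h1, aEl_pos Q k h2]
  show (Matrix.single t s (1:k)) * (Matrix.single t' u 1) = 0
  exact Matrix.single_mul_single_of_ne (c := (1:k)) t s t' h 1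

def Msp (E : Fin n → Fin n → Prop) : Submodule k ↥(pathAlg Q k) :=
  Submodule.span k {v | ∃ t s, Q.Reach s t ∧ ¬ E t s ∧ v = aEl Q k t s}

lemma J_eq (i : Fin n) : J Q k i = Msp Q k (fun t s => t = i ∧ s = i) := rfl

lemma Msp_mul (E1 E2 E3 : Fin n → Fin n → Prop)
    (hA : ∀ t s u, Q.Reach u s → Q.Reach s t → ¬ E1 t s → ¬ E2 s u → ¬ E3 t u)
    (hB : ∀ t u, Q.Reach u t → ¬ E3 t u →
      ∃ s, Q.Reach u s ∧ Q.Reach s t ∧ ¬ E1 t s ∧ ¬ E2 s u) :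
    Msp Q k E1 * Msp Q k E2 = Msp Q k E3 := by
  unfold Msp
  rw [Submodule.span_mul_span]
  apply le_antisymm
  · rw [Submodule.span_le]
    intro v hv
    rw [Set.mem_mul] at hv
    obtain ⟨x, hx, y, hy, rfl⟩ := hv
    obtain ⟨t, s, hst, he1, rfl⟩ := hx
    obtain ⟨t', u, hut', he2, rfl⟩ := hy
    by_cases hs : s = t'
    · subst hs
      rw [aEl_mul Q k hst hut']
      exact Submodule.subset_span ⟨t, u, hut'.trans hst, hA t s u hut' hst he1 he2, rfl⟩
    · rw [aEl_mul_ne Q k hs hst hut']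
      exact Submodule.zero_mem _
  · rw [Submodule.span_le]
    rintro v ⟨t, u, hut, he3, rfl⟩
    obtain ⟨s, h1, h2, he1, he2⟩ := hB t u hut he3
    rw [(aEl_mul Q k h2 h1).symm]
    exact Submodule.subset_span
      (Set.mul_mem_mul ⟨t, s, h2, he1, rfl⟩ ⟨s, u, h1, he2, rfl⟩)

end ProofAux

/-- The ideals `J_i` satisfy: (a) `J_i J_i = J_i`; (b) `J_i J_j = J_j J_i`
when there is no arrow between `i` and `j`; (c) `J_j J_i J_j = J_i J_j J_i = J_j J_i`
when there is an arrow `i → j`. -/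
theorem statement10 {n : ℕ} (k : Type) [Field k] [IsAlgClosed k] (hn : 1 < n)
    (Q : TreeQuiver n) (hadm : Q.Admissible) (hK' : ∃ s, Q.inK' s) (i j : Fin n) :
    (J Q k i * J Q k i = J Q k i) ∧
    ((¬ Q.arr i j ∧ ¬ Q.arr j i) → J Q k i * J Q k j = J Q k j * J Q k i) ∧
    (Q.arr i j →
      (J Q k j * J Q k i * J Q k j = J Q k j * J Q k i ∧
       J Q k i * J Q k j * J Q k i = J Q k j * J Q k i)) := by
  have hanti : ∀ {a b : Fin n}, Q.Reach a b → Q.Reach b a → a = b :=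
    fun h1 h2 => reach_antisymm Q h1 h2
  refine ⟨?_, ?_, ?_⟩
  · -- (a)
    refine Msp_mul Q k _ _ _ ?_ ?_
    · rintro t s u h1 h2 hE1 hE2 ⟨rfl, rfl⟩
      exact hE1 ⟨rfl, hanti h2 h1⟩
    · intro t u hut hE3
      by_cases hu : u = i
      · subst u
        have ht : t ≠ i := fun h => hE3 ⟨h, rfl⟩
        exact ⟨t, hut, .refl, fun h => ht h.1, fun h => ht h.1⟩
      · exact ⟨u, .refl, hut, hE3, fun h => hu h.2⟩
  · -- (b)
    rintro ⟨hnij, hnji⟩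
    by_cases hij : i = j
    · subst hij; rfl
    have P1 : J Q k i * J Q k j =
        Msp Q k (fun t u => (t = i ∧ u = i) ∨ (t = j ∧ u = j)) := by
      refine Msp_mul Q k _ _ _ ?_ ?_
      · rintro t s u h1 h2 hE1 hE2 (⟨rfl, rfl⟩ | ⟨rfl, rfl⟩)
        · exact hE1 ⟨rfl, hanti h2 h1⟩
        · exact hE2 ⟨hanti h2 h1, rfl⟩
      · intro t u hut hE3
        by_cases hu : u = j
        · subst u
          by_cases ht : t = i
          · subst ht
            obtain ⟨s, hsi, hsj, hr1, hr2⟩ := exists_mid Q hnji (Ne.symm hij) hut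
            exact ⟨s, hr1, hr2, fun h => hsi h.2, fun h => hsj h.1⟩
          · exact ⟨t, hut, .refl, fun h => ht h.1, fun h => hE3 (Or.inr h)⟩
        · exact ⟨u, .refl, hut, fun h => hE3 (Or.inl h), fun h => hu h.1⟩
    have P2 : J Q k j * J Q k i =
        Msp Q k (fun t u => (t = i ∧ u = i) ∨ (t = j ∧ u = j)) := by
      refine Msp_mul Q k _ _ _ ?_ ?_
      · rintro t s u h1 h2 hE1 hE2 (⟨rfl, rfl⟩ | ⟨rfl, rfl⟩)
        · exact hE2 ⟨hanti h2 h1, rfl⟩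
        · exact hE1 ⟨rfl, hanti h2 h1⟩
      · intro t u hut hE3
        by_cases hu : u = i
        · subst u
          by_cases ht : t = j
          · subst ht
            obtain ⟨s, hsj, hsi, hr1, hr2⟩ := exists_mid Q hnij hij hut
            exact ⟨s, hr1, hr2, fun h => hsj h.2, fun h => hsi h.1⟩
          · exact ⟨t, hut, .refl, fun h => ht h.1, fun h => hE3 (Or.inl h)⟩
        · exact ⟨u, .refl, hut, fun h => hE3 (Or.inr h), fun h => hu h.1⟩
    rw [P1, P2]
  · -- (c)
    intro hij
    have hne : i ≠ j := fun h => Q.loopless i (h ▸ hij)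
    have hnji : ¬ Q.arr j i := Q.oneway i j hij
    have hnrji : ¬ Q.Reach j i := no_cycle Q hij
    set E' : Fin n → Fin n → Prop :=
      fun t u => (t = i ∧ u = i) ∨ (t = j ∧ u = j) ∨ (t = j ∧ u = i) with hE'def
    have S1 : J Q k j * J Q k i = Msp Q k E' := by
      refine Msp_mul Q k _ _ _ ?_ ?_
      · rintro t s u h1 h2 hE1 hE2 (⟨rfl, rfl⟩ | ⟨rfl, rfl⟩ | ⟨rfl, rfl⟩)
        · exact hE2 ⟨hanti h2 h1, rfl⟩
        · exact hE1 ⟨rfl, hanti h2 h1⟩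
        · rcases mid Q hij h1 h2 with rfl | rfl
          · exact hE2 ⟨rfl, rfl⟩
          · exact hE1 ⟨rfl, rfl⟩
      · intro t u hut hE3
        by_cases hu : u = i
        · subst u
          have ht1 : t ≠ i := fun h => hE3 (Or.inl ⟨h, rfl⟩)
          have ht2 : t ≠ j := fun h => hE3 (Or.inr (Or.inr ⟨h, rfl⟩))
          exact ⟨t, hut, .refl, fun h => ht2 h.1, fun h => ht1 h.1⟩
        · exact ⟨u, .refl, hut, fun h => hE3 (Or.inr (Or.inl h)), fun h => hu h.2⟩
    have S2 : Msp Q k E' * J Q k j = Msp Q k E' := by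
      refine Msp_mul Q k _ _ _ ?_ ?_
      · rintro t s u h1 h2 hE1 hE2 (⟨rfl, rfl⟩ | ⟨rfl, rfl⟩ | ⟨rfl, rfl⟩)
        · exact hE1 (Or.inl ⟨rfl, hanti h2 h1⟩)
        · exact hE2 ⟨hanti h2 h1, rfl⟩
        · rcases mid Q hij h1 h2 with rfl | rfl
          · exact hE1 (Or.inr (Or.inr ⟨rfl, rfl⟩))
          · exact hE1 (Or.inr (Or.inl ⟨rfl, rfl⟩))
      · intro t u hut hE3
        by_cases hu : u = j
        · subst u
          have ht2 : t ≠ j := fun h => hE3 (Or.inr (Or.inl ⟨h, rfl⟩))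
          have ht1 : t ≠ i := fun h => hnrji (h ▸ hut)
          refine ⟨t, hut, .refl, ?_, fun h => ht2 h.1⟩
          rintro (⟨rfl, _⟩ | ⟨rfl, _⟩ | ⟨rfl, _⟩)
          · exact ht1 rfl
          · exact ht2 rfl
          · exact ht2 rfl
        · exact ⟨u, .refl, hut, hE3, fun h => hu h.1⟩
    have S3 : J Q k i * J Q k j =
        Msp Q k (fun t u => (t = i ∧ u = i) ∨ (t = j ∧ u = j)) := by
      refine Msp_mul Q k _ _ _ ?_ ?_
      · rintro t s u h1 h2 hE1 hE2 (⟨rfl, rfl⟩ | ⟨rfl, rfl⟩)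
        · exact hE1 ⟨rfl, hanti h2 h1⟩
        · exact hE2 ⟨hanti h2 h1, rfl⟩
      · intro t u hut hE3
        by_cases hu : u = j
        · subst u
          have ht : t ≠ i := fun h => hnrji (h ▸ hut)
          exact ⟨t, hut, .refl, fun h => ht h.1, fun h => hE3 (Or.inr h)⟩
        · exact ⟨u, .refl, hut, fun h => hE3 (Or.inl h), fun h => hu h.1⟩
    have S4 : Msp Q k (fun t u => (t = i ∧ u = i) ∨ (t = j ∧ u = j)) * J Q k i =
        Msp Q k E' := by
      refine Msp_mul Q k _ _ _ ?_ ?_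
      · rintro t s u h1 h2 hE1 hE2 (⟨rfl, rfl⟩ | ⟨rfl, rfl⟩ | ⟨rfl, rfl⟩)
        · exact hE2 ⟨hanti h2 h1, rfl⟩
        · exact hE1 (Or.inr ⟨rfl, hanti h2 h1⟩)
        · rcases mid Q hij h1 h2 with rfl | rfl
          · exact hE2 ⟨rfl, rfl⟩
          · exact hE1 (Or.inr ⟨rfl, rfl⟩)
      · intro t u hut hE3
        by_cases hu : u = i
        · subst u
          have ht1 : t ≠ i := fun h => hE3 (Or.inl ⟨h, rfl⟩)
          have ht2 : t ≠ j := fun h => hE3 (Or.inr (Or.inr ⟨h, rfl⟩))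
          refine ⟨t, hut, .refl, ?_, fun h => ht1 h.1⟩
          rintro (⟨rfl, _⟩ | ⟨rfl, _⟩)
          · exact ht1 rfl
          · exact ht2 rfl
        · refine ⟨u, .refl, hut, ?_, fun h => hu h.2⟩
          rintro (h | h)
          · exact hE3 (Or.inl h)
          · exact hE3 (Or.inr (Or.inl h))
    constructor
    · rw [S1, S2]
    · rw [S3, S4, S1]

end DPF
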